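/- Let M be a compact subset of ℝ^D, let Y ⊂ ℝ^d, let μ be a probability measure on M, let ν be an absolutely continuous probability measure on Y, and let T : M → Y be an invertible Borel map with Borel inverse. Define c_T(x,y) = ‖T(x) − y‖²/2. Suppose R* : Y → Y is a Borel map with R*_#ν = T_#μ that attains W₂²(T_#μ, ν), i.e., ∫ ‖R*(y) − y‖²/2 dν(y) = W₂²(T_#μ, ν). Then G* := T^{-1} ∘ R* satisfies ∫ c_T(G*(y), y) dν(y) = OT_{c_T}(μ,ν); that is, G* is an optimal transport map for OT_{c_T}(μ,ν). -/

import Mathlib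

open MeasureTheory

noncomputable section

/-- `π` is a coupling of `μ` and `ν`. -/
def IsCoupling {X Y : Type*} [MeasurableSpace X] [MeasurableSpace Y]
    (π : Measure (X × Y)) (μ : Measure X) (ν : Measure Y) : Prop :=
  π.map Prod.fst = μ ∧ π.map Prod.snd = ν

/-- The optimal transport cost `OT_c(μ,ν) = inf_{π ∈ Π(μ,ν)} ∫ c(x,y) dπ`. -/
noncomputable def OTcost {X Y : Type*} [MeasurableSpace X] [MeasurableSpace Y]
    (c : X → Y → ℝ) (μ : Measure X) (ν : Measure Y) : ℝ :=
  sInf {r : ℝ | ∃ π : Measure (X × Y), IsCoupling π μ ν ∧ r = ∫ z, c z.1 z.2 ∂π}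

/-- The squared Wasserstein-2 distance
`W₂²(ρ,ν) = inf_{π ∈ Π(ρ,ν)} ∫ dist(y,z)²/2 dπ`. -/
noncomputable def W2sq {Z : Type*} [MeasurableSpace Z] [PseudoMetricSpace Z]
    (ρ ν : Measure Z) : ℝ :=
  sInf {r : ℝ | ∃ π : Measure (Z × Z), IsCoupling π ρ ν ∧
    r = ∫ z, dist z.1 z.2 ^ 2 / 2 ∂π}

/-- if `R* : Y → Y` pushes `ν` to `T_#μ` and attains `W₂²(T_#μ, ν)`, then
`G* := T⁻¹ ∘ R*` attains the optimal transport cost `OT_{c_T}(μ,ν)`, where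
`c_T(x,y) = ‖T(x) - y‖²/2` and `Tinv` is the Borel inverse of the invertible Borel map
`T`. -/
theorem inv_comp_optimal_map {D d : ℕ}
    (M : Set (EuclideanSpace ℝ (Fin D))) (hM : IsCompact M)
    (Y : Set (EuclideanSpace ℝ (Fin d)))
    (μ : Measure M) (ν : Measure Y)
    [IsProbabilityMeasure μ] [IsProbabilityMeasure ν]
    (hνac : ν.map (Subtype.val : Y → EuclideanSpace ℝ (Fin d)) ≪ volume)
    (T : M → Y) (hTm : Measurable T)
    (Tinv : Y → M) (hTinvm : Measurable Tinv)
    (hTinv : Function.LeftInverse Tinv T)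
    (Rstar : Y → Y) (hRm : Measurable Rstar)
    (hRpush : ν.map Rstar = μ.map T)
    (hRopt : ∫ y, dist (Rstar y) y ^ 2 / 2 ∂ν = W2sq (μ.map T) ν) :
    ∫ y, dist (T ((Tinv ∘ Rstar) y)) y ^ 2 / 2 ∂ν
      = OTcost (fun (x : M) (y : Y) => dist (T x) y ^ 2 / 2) μ ν := by
  classical
  have hval : Measurable (Subtype.val : Y → EuclideanSpace ℝ (Fin d)) :=
    measurable_subtype_coe
  -- the "good set" where T ∘ Tinv = id
  have hS : MeasurableSet {y : Y | T (Tinv y) = y} := by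
    have h1 : Measurable fun y : Y => ((T (Tinv y) : Y) : EuclideanSpace ℝ (Fin d)) :=
      hval.comp (hTm.comp hTinvm)
    have h2 := measurableSet_eq_fun h1 hval
    convert h2 using 1
    ext y
    simp [Subtype.ext_iff]
  have hSmap : (μ.map T) {y : Y | T (Tinv y) = y}ᶜ = 0 := by
    have hpre : T ⁻¹' {y : Y | T (Tinv y) = y}ᶜ = ∅ := by
      ext x; simp [hTinv x]
    rw [Measure.map_apply hTm hS.compl, hpre, measure_empty]
  -- measurability of integrands
  have hd : Measurable fun z : Y × Y => dist z.1 z.2 ^ 2 / 2 := by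
    have h0 : Measurable fun z : Y × Y =>
        dist (z.1 : EuclideanSpace ℝ (Fin d)) (z.2 : EuclideanSpace ℝ (Fin d)) :=
      (hval.comp measurable_fst).dist (hval.comp measurable_snd)
    simpa [Subtype.dist_eq] using (h0.pow_const 2).div_const 2
  have hcT : Measurable fun z : M × Y => dist (T z.1) z.2 ^ 2 / 2 := by
    have h0 : Measurable fun z : M × Y =>
        dist ((T z.1 : Y) : EuclideanSpace ℝ (Fin d)) (z.2 : EuclideanSpace ℝ (Fin d)) :=
      (hval.comp (hTm.comp measurable_fst)).dist (hval.comp measurable_snd)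
    simpa [Subtype.dist_eq] using (h0.pow_const 2).div_const 2
  -- the two sets of coupling costs coincide
  have hsets : {r : ℝ | ∃ π : Measure (M × Y), IsCoupling π μ ν ∧
        r = ∫ z, dist (T z.1) z.2 ^ 2 / 2 ∂π}
      = {r : ℝ | ∃ π : Measure (Y × Y), IsCoupling π (μ.map T) ν ∧
        r = ∫ z, dist z.1 z.2 ^ 2 / 2 ∂π} := by
    ext r
    constructor
    · rintro ⟨π, ⟨hπ1, hπ2⟩, hr⟩
      have hPm : Measurable (Prod.map T (id : Y → Y)) := hTm.prodMap measurable_id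
      refine ⟨π.map (Prod.map T id), ⟨?_, ?_⟩, ?_⟩
      · rw [Measure.map_map measurable_fst hPm]
        have : (Prod.fst ∘ Prod.map T (id : Y → Y)) = T ∘ Prod.fst := rfl
        rw [this, ← Measure.map_map hTm measurable_fst, hπ1]
      · rw [Measure.map_map measurable_snd hPm]
        have : (Prod.snd ∘ Prod.map T (id : Y → Y)) = Prod.snd := rfl
        rw [this, hπ2]
      · rw [integral_map hPm.aemeasurable hd.aestronglyMeasurable]
        exact hr
    · rintro ⟨π, ⟨hπ1, hπ2⟩, hr⟩
      have hPm : Measurable (Prod.map Tinv (id : Y → Y)) := hTinvm.prodMap measurable_id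
      refine ⟨π.map (Prod.map Tinv id), ⟨?_, ?_⟩, ?_⟩
      · rw [Measure.map_map measurable_fst hPm]
        have h1 : (Prod.fst ∘ Prod.map Tinv (id : Y → Y)) = Tinv ∘ Prod.fst := rfl
        rw [h1, ← Measure.map_map hTinvm measurable_fst, hπ1,
          Measure.map_map hTinvm hTm, hTinv.comp_eq_id, Measure.map_id]
      · rw [Measure.map_map measurable_snd hPm]
        have : (Prod.snd ∘ Prod.map Tinv (id : Y → Y)) = Prod.snd := rfl
        rw [this, hπ2]
      · rw [integral_map hPm.aemeasurable hcT.aestronglyMeasurable]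
        have hae : ∀ᵐ z : Y × Y ∂π, T (Tinv z.1) = z.1 := by
          rw [MeasureTheory.ae_iff]
          have heq : {z : Y × Y | ¬ T (Tinv z.1) = z.1}
              = Prod.fst ⁻¹' ({y : Y | T (Tinv y) = y}ᶜ) := rfl
          rw [heq, ← Measure.map_apply measurable_fst hS.compl, hπ1, hSmap]
        have := integral_congr_ae (μ := π)
          (f := fun z : Y × Y => dist (T (Tinv z.1)) z.2 ^ 2 / 2)
          (g := fun z : Y × Y => dist z.1 z.2 ^ 2 / 2)
          (hae.mono fun z hz => by dsimp only; rw [hz])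
        rw [hr, ← this]
        rfl
  have hOT : OTcost (fun (x : M) (y : Y) => dist (T x) y ^ 2 / 2) μ ν
      = W2sq (μ.map T) ν := by
    unfold OTcost W2sq
    rw [hsets]
  have haeν : ∀ᵐ y ∂ν, T (Tinv (Rstar y)) = Rstar y := by
    rw [MeasureTheory.ae_iff]
    have heq : {y : Y | ¬ T (Tinv (Rstar y)) = Rstar y}
        = Rstar ⁻¹' ({y : Y | T (Tinv y) = y}ᶜ) := rfl
    rw [heq, ← Measure.map_apply hRm hS.compl, hRpush, hSmap]
  have hLHS : ∫ y, dist (T ((Tinv ∘ Rstar) y)) y ^ 2 / 2 ∂ν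
      = ∫ y, dist (Rstar y) y ^ 2 / 2 ∂ν :=
    integral_congr_ae (haeν.mono fun y hy => by simp [Function.comp, hy])
  rw [hLHS, hRopt, hOT]
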